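/- For every rational number θ and every τ in the upper half-plane ℍ, there exists a sequence of matrices γ_n = (a_n b_n; c_n d_n) ∈ SL₂(ℤ) with a_n/c_n → θ, c_n/d_n → 0, d_n ≥ 0 and |c_n d_n| → ∞, and for any such sequence one has e^{2πi γ_n τ} → e^{2πiθ} as n → ∞, where γτ := (aτ + b)/(cτ + d) denotes the fractional linear action of γ = (a b; c d) ∈ SL₂(ℤ) on ℍ. -/

import Mathlib

open Filter

/-- A sequence `γₙ = (aₙ bₙ; cₙ dₙ) ∈ SL₂(ℤ)` approximating the rational `θ`:
`aₙ/cₙ → θ`, `cₙ/dₙ → 0`, `dₙ ≥ 0`, `|cₙ dₙ| → ∞`. -/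
def ApproxSeq (θ : ℚ) (γ : ℕ → Matrix.SpecialLinearGroup (Fin 2) ℤ) : Prop :=
  Tendsto (fun n => ((γ n 0 0 : ℤ) : ℝ) / ((γ n 1 0 : ℤ) : ℝ)) atTop (nhds (θ : ℝ)) ∧
  Tendsto (fun n => ((γ n 1 0 : ℤ) : ℝ) / ((γ n 1 1 : ℤ) : ℝ)) atTop (nhds 0) ∧
  (∀ n, 0 ≤ (γ n 1 1 : ℤ)) ∧
  Tendsto (fun n => |(γ n 1 0 : ℤ) * (γ n 1 1 : ℤ)|) atTop atTop

/-- For every rational `θ` and every `τ` in the upper half-plane, there is a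
sequence `γₙ ∈ SL₂(ℤ)` with `aₙ/cₙ → θ`, `cₙ/dₙ → 0`, `dₙ ≥ 0`, `|cₙ dₙ| → ∞`, and
for any such sequence `e^{2πi γₙτ} → e^{2πiθ}`, where
`γτ = (aτ + b)/(cτ + d)` is the fractional linear action. -/
theorem exp_fractional_linear_tendsto (θ : ℚ) (τ : ℂ) (hτ : 0 < τ.im) :
    (∃ γ : ℕ → Matrix.SpecialLinearGroup (Fin 2) ℤ, ApproxSeq θ γ) ∧
    ∀ γ : ℕ → Matrix.SpecialLinearGroup (Fin 2) ℤ, ApproxSeq θ γ →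
      Tendsto (fun n => Complex.exp (2 * Real.pi * Complex.I *
          ((((γ n 0 0 : ℤ) : ℂ) * τ + ((γ n 0 1 : ℤ) : ℂ)) /
            (((γ n 1 0 : ℤ) : ℂ) * τ + ((γ n 1 1 : ℤ) : ℂ)))))
        atTop (nhds (Complex.exp (2 * Real.pi * Complex.I * (θ : ℂ)))) := by
  constructor
  · -- existence
      obtain ⟨u, v, huv⟩ : IsCoprime θ.num (θ.den : ℤ) := by
        rw [Int.isCoprime_iff_gcd_eq_one]; exact θ.reduced
      set p : ℤ := θ.num with hp
      set q : ℤ := (θ.den : ℤ) with hqdef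
      have hq : 0 < q := by positivity
      set m : ℕ → ℤ := fun n => (n : ℤ) + |u| with hm
      set d : ℕ → ℤ := fun n => u + q * m n with hd
      have hmnn : ∀ n : ℕ, 0 ≤ m n := fun n => by positivity
      have hdge : ∀ n : ℕ, (n : ℤ) ≤ d n := by
        intro n
        have h1 : m n ≤ q * m n := le_mul_of_one_le_left (hmnn n) hq
        simp only [hd, hm] at h1 ⊢
        nlinarith [neg_abs_le u, abs_nonneg u]
      have hdnn : ∀ n : ℕ, 0 ≤ d n := fun n => le_trans (by positivity) (hdge n)
      have hdR : Tendsto (fun n : ℕ => ((d n : ℤ) : ℝ)) atTop atTop := by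
        apply tendsto_atTop_mono (f := fun n : ℕ => (n : ℝ)) (fun n => by push_cast; exact_mod_cast hdge n)
        exact tendsto_natCast_atTop_atTop
      have hdet : ∀ n : ℕ, (!![p, -v + p * m n; q, d n]).det = 1 := by
        intro n
        rw [Matrix.det_fin_two_of]
        simp only [hd]
        linear_combination huv
      refine ⟨fun n => ⟨!![p, -v + p * m n; q, d n], hdet n⟩, ?_, ?_, ?_, ?_⟩
      · have he : ∀ n : ℕ, ((p : ℤ) : ℝ) / ((q : ℤ) : ℝ) = (θ : ℝ) := by
          intro n
          rw [Rat.cast_def]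
          push_cast [hp, hqdef]
          ring
        exact Tendsto.congr (fun n => (he n).symm) tendsto_const_nhds
      · exact Tendsto.div_atTop (tendsto_const_nhds (x := (q : ℝ))) hdR
      · exact hdnn
      · apply tendsto_atTop_mono (f := fun n : ℕ => (n : ℤ))
        · intro n
          show (n : ℤ) ≤ |q * d n|
          rw [abs_of_nonneg (mul_nonneg hq.le (hdnn n))]
          calc (n:ℤ) ≤ d n := hdge n
            _ ≤ q * d n := le_mul_of_one_le_left (hdnn n) hq
        · exact tendsto_natCast_atTop_atTop
  · -- convergence
    rintro γ ⟨h1, h2, h3, h4⟩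
    classical
    let a : ℕ → ℤ := fun n => γ n 0 0
    let b : ℕ → ℤ := fun n => γ n 0 1
    let c : ℕ → ℤ := fun n => γ n 1 0
    let d : ℕ → ℤ := fun n => γ n 1 1
    have h1' : Tendsto (fun n => ((a n : ℝ)) / ((c n : ℝ))) atTop (nhds (θ : ℝ)) := h1
    have h2' : Tendsto (fun n => ((c n : ℝ)) / ((d n : ℝ))) atTop (nhds 0) := h2
    have h4' : Tendsto (fun n => |c n * d n|) atTop atTop := h4
    have hdet : ∀ n, a n * d n - b n * c n = 1 := by
      intro n
      have := (γ n).2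
      rw [Matrix.det_fin_two] at this
      exact this
    -- eventually c ≠ 0 and d ≠ 0
    have hcd0 : ∀ᶠ n in atTop, c n ≠ 0 ∧ d n ≠ 0 := by
      filter_upwards [h4'.eventually_ge_atTop 1] with n hn
      constructor
      · rintro h0; rw [h0] at hn; simp at hn
      · rintro h0; rw [h0] at hn; simp at hn
    -- eventually |c/d * τ.re| ≤ 1/2
    have hsm : ∀ᶠ n in atTop, |((c n : ℝ) / (d n : ℝ)) * τ.re| < 1/2 := by
      have h2'' := h2'.mul_const τ.re
      rw [zero_mul] at h2''
      have := h2''.eventually (eventually_abs_sub_lt 0 (by norm_num : (0:ℝ) < 1/2))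
      exact this.mono fun n hn => by simpa using hn
    -- norm of c(cτ+d) tends to atTop
    have hnorm : Tendsto (fun n => ‖(c n : ℂ) * ((c n : ℂ) * τ + (d n : ℂ))‖) atTop atTop := by
      have hlow : ∀ᶠ n in atTop,
          (|c n * d n| : ℝ) / 2 ≤ ‖(c n : ℂ) * ((c n : ℂ) * τ + (d n : ℂ))‖ := by
        filter_upwards [hcd0, hsm] with n hn hs
        obtain ⟨hc0, hd0⟩ := hn
        have hd0' : ((d n : ℝ)) ≠ 0 := Int.cast_ne_zero.mpr hd0
        have habs : |(c n : ℝ) * τ.re| ≤ |(d n : ℝ)| / 2 := by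
          have := hs.le
          rw [abs_mul, abs_div] at this
          rw [abs_mul]
          rw [div_mul_eq_mul_div, div_le_iff₀ (abs_pos.mpr hd0')] at this
          linarith
        have hre : |(d n : ℝ)| / 2 ≤ |(c n : ℝ) * τ.re + (d n : ℝ)| := by
          have h6 := abs_sub_abs_le_abs_sub ((d n : ℝ)) ((c n : ℝ) * τ.re + (d n : ℝ))
          have h7 : ((d n:ℝ)) - ((c n : ℝ) * τ.re + (d n : ℝ)) = -((c n : ℝ) * τ.re) := by ring
          rw [h7, abs_neg] at h6
          linarith
        have h5 : |(c n : ℝ) * τ.re + (d n : ℝ)| ≤ ‖(c n : ℂ) * τ + (d n : ℂ)‖ := by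
          have := Complex.abs_re_le_norm ((c n : ℂ) * τ + (d n : ℂ))
          simpa using this
        rw [norm_mul]
        have hcabs : ‖((c n : ℂ))‖ = |(c n : ℝ)| := by
          exact Complex.norm_intCast _
        rw [hcabs]
        calc (|c n * d n| : ℝ) / 2 = |(c n:ℝ)| * (|(d n:ℝ)|/2) := by
              push_cast [abs_mul]; ring
          _ ≤ |(c n:ℝ)| * ‖(c n : ℂ) * τ + (d n : ℂ)‖ := by
              apply mul_le_mul_of_nonneg_left (le_trans hre h5) (abs_nonneg _)
      apply tendsto_atTop_mono' _ hlow
      apply Tendsto.atTop_div_const (by norm_num)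
      apply tendsto_atTop_mono (f := fun n => ((|c n * d n| : ℤ) : ℝ)) (fun n => by push_cast; exact le_refl _)
      exact tendsto_intCast_atTop_atTop.comp h4'
    -- inverse tends to 0
    have hinv : Tendsto (fun n => ((c n : ℂ) * ((c n : ℂ) * τ + (d n : ℂ)))⁻¹) atTop (nhds 0) := by
      rw [tendsto_zero_iff_norm_tendsto_zero]
      simp only [norm_inv]
      exact hnorm.inv_tendsto_atTop
    -- a/c tends to θ in ℂ
    have hac : Tendsto (fun n => ((a n : ℂ)) / ((c n : ℂ))) atTop (nhds (θ : ℂ)) := by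
      have hcomp := (Complex.continuous_ofReal.tendsto ((θ : ℝ))).comp h1'
      rw [Complex.ofReal_ratCast] at hcomp
      apply hcomp.congr
      intro n
      simp only [Function.comp_def]
      push_cast
      ring
    -- combine
    have key : Tendsto (fun n => (((a n : ℂ)) * τ + ((b n : ℂ))) / (((c n : ℂ)) * τ + ((d n : ℂ))))
        atTop (nhds (θ : ℂ)) := by
      have hsub := hac.sub hinv
      rw [sub_zero] at hsub
      apply hsub.congr'
      filter_upwards [hcd0] with n hn
      obtain ⟨hc0, hd0⟩ := hn
      have hcC : ((c n : ℂ)) ≠ 0 := Int.cast_ne_zero.mpr hc0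
      have hden : ((c n : ℂ)) * τ + ((d n : ℂ)) ≠ 0 := by
        intro h0
        have him := congrArg Complex.im h0
        simp [Complex.add_im, Complex.mul_im] at him
        rcases him with h | h
        · exact hc0 (by exact_mod_cast h)
        · exact hτ.ne' h
      have hdetC : ((a n : ℂ)) * ((d n : ℂ)) - ((b n : ℂ)) * ((c n : ℂ)) = 1 := by
        exact_mod_cast congrArg (fun x : ℤ => (x : ℂ)) (hdet n)
      field_simp
      linear_combination hdetC
    have := (Complex.continuous_exp.tendsto _).comp (key.const_mul (2 * Real.pi * Complex.I))
    simp only [Function.comp_def] at this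
    exact this
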